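/- Let α1, α2 ∈ [0,1] with β i = √(αi(1−αi)) for i = 1, 2, and define the 4×4 real-entried states ρ1 = [[1,0],[0,0]] ⊗ [[1,0],[0,0]] and ρ2 = [[1−α1, β1],[β1, α1]] ⊗ [[1−α2, β2],[β2, α2]] on ℂ² ⊗ ℂ². If α1 + α2 ≥ 1, then ρ1 and ρ2 are perfectly distinguishable in SEP. -/

import Mathlib

open Matrix Kronecker ComplexOrder

noncomputable section

abbrev Mat (dA dB : ℕ) := Matrix (Fin dA × Fin dB) (Fin dA × Fin dB) ℂ

/-- Membership in the dual cone SEP*. -/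
def InSEPDual {dA dB : ℕ} (M : Mat dA dB) : Prop :=
  M.IsHermitian ∧ ∀ (A : Matrix (Fin dA) (Fin dA) ℂ) (B : Matrix (Fin dB) (Fin dB) ℂ),
    A.PosSemidef → B.PosSemidef → 0 ≤ ((A ⊗ₖ B) * M).trace

/-- Perfect distinguishability of two states in SEP. -/
def PerfDistSEP {dA dB : ℕ} (ρ1 ρ2 : Mat dA dB) : Prop :=
  ∃ M1 M2 : Mat dA dB, InSEPDual M1 ∧ InSEPDual M2 ∧ M1 + M2 = 1 ∧
    (M1 * ρ1).trace = 1 ∧ (M2 * ρ2).trace = 1 ∧ (M2 * ρ1).trace = 0 ∧ (M1 * ρ2).trace = 0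

lemma kron_psd {A B : Matrix (Fin 2) (Fin 2) ℂ} (hA : A.PosSemidef) (hB : B.PosSemidef) :
    (A ⊗ₖ B).PosSemidef := by
  exact hA.kronecker hB

def rv (v : Fin 2 × Fin 2 → ℝ) : Fin 2 × Fin 2 → ℂ := fun i => (v i : ℂ)

lemma sep_vvT (v : Fin 2 × Fin 2 → ℝ) : InSEPDual (vecMulVec (rv v) (rv v)) := by
  constructor
  · ext x y
    simp [Matrix.conjTranspose_apply, Matrix.vecMulVec_apply, rv, mul_comm]
  · intro A B hA hB
    have hk := (kron_psd hA hB).dotProduct_mulVec_nonneg (rv v)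
    rw [show star (rv v) = rv v from funext fun i => by simp [rv]] at hk
    have : ((A ⊗ₖ B) * vecMulVec (rv v) (rv v)).trace
        = dotProduct (rv v) ((A ⊗ₖ B) *ᵥ (rv v)) := by
      simp only [Matrix.trace, Matrix.diag_apply, Matrix.mul_apply, Matrix.vecMulVec_apply,
        dotProduct, Matrix.mulVec, rv, Pi.star_apply, Fintype.sum_prod_type, Fin.sum_univ_two, Complex.conj_ofReal]
      ring
    rw [this]; exact hk

def PT (u : Fin 2 × Fin 2 → ℝ) : Mat 2 2 :=
  Matrix.of fun x y => rv u (x.1, y.2) * rv u (y.1, x.2)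

lemma sep_PT (u : Fin 2 × Fin 2 → ℝ) : InSEPDual (PT u) := by
  constructor
  · ext x y
    simp [PT, Matrix.conjTranspose_apply, rv, mul_comm]
  · intro A B hA hB
    have hk := (kron_psd hA hB.transpose).dotProduct_mulVec_nonneg (rv u)
    rw [show star (rv u) = rv u from funext fun i => by simp [rv]] at hk
    have : ((A ⊗ₖ B) * PT u).trace
        = dotProduct (rv u) ((A ⊗ₖ Bᵀ) *ᵥ (rv u)) := by
      simp only [Matrix.trace, Matrix.diag_apply, Matrix.mul_apply, PT, Matrix.of_apply,
        dotProduct, Matrix.mulVec, rv, Matrix.transpose_apply, Pi.star_apply, Fintype.sum_prod_type,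
        Fin.sum_univ_two, Complex.conj_ofReal, Matrix.kronecker_apply]
      ring
    rw [this]; exact hk

lemma sep_add {M N : Mat 2 2} (hM : InSEPDual M) (hN : InSEPDual N) : InSEPDual (M + N) := by
  refine ⟨hM.1.add hN.1, fun A B hA hB => ?_⟩
  rw [Matrix.mul_add, Matrix.trace_add]
  exact add_nonneg (hM.2 A B hA hB) (hN.2 A B hA hB)

/-- vector from a 2×2 table -/
def tv (m : Matrix (Fin 2) (Fin 2) ℝ) : Fin 2 × Fin 2 → ℝ := fun x => m x.1 x.2


set_option maxHeartbeats 1000000 in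
/-- Sufficiency: if `α1 + α2 ≥ 1` then the two separable pure states are perfectly
distinguishable in SEP. -/
theorem sufficiency (α1 α2 β1 β2 : ℝ)
    (hα1 : α1 ∈ Set.Icc (0:ℝ) 1) (hα2 : α2 ∈ Set.Icc (0:ℝ) 1)
    (hβ1 : β1 = Real.sqrt (α1 * (1 - α1))) (hβ2 : β2 = Real.sqrt (α2 * (1 - α2)))
    (h : 1 ≤ α1 + α2) :
    PerfDistSEP
      ((!![(1:ℂ), 0; 0, 0]) ⊗ₖ (!![(1:ℂ), 0; 0, 0]))
      ((!![((1 - α1 : ℝ) : ℂ), (β1 : ℝ); (β1 : ℝ), (α1 : ℝ)]) ⊗ₖ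
        (!![((1 - α2 : ℝ) : ℂ), (β2 : ℝ); (β2 : ℝ), (α2 : ℝ)])) := by
  obtain ⟨hα1l, hα1r⟩ := hα1
  obtain ⟨hα2l, hα2r⟩ := hα2
  by_cases h1 : α1 = 1
  · -- M1 = diag(1,1,0,0), M2 = diag(0,0,1,1)
    refine ⟨vecMulVec (rv (tv !![1,0;0,0])) (rv (tv !![1,0;0,0]))
          + vecMulVec (rv (tv !![0,1;0,0])) (rv (tv !![0,1;0,0])),
        vecMulVec (rv (tv !![0,0;1,0])) (rv (tv !![0,0;1,0]))
          + vecMulVec (rv (tv !![0,0;0,1])) (rv (tv !![0,0;0,1])),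
        sep_add (sep_vvT _) (sep_vvT _), sep_add (sep_vvT _) (sep_vvT _), ?_, ?_, ?_, ?_, ?_⟩
    · ext ⟨i,j⟩ ⟨k,l⟩
      fin_cases i <;> fin_cases j <;> fin_cases k <;> fin_cases l <;>
        simp [Matrix.vecMulVec_apply, rv, tv, Matrix.one_apply, Prod.ext_iff]
    · simp [Matrix.trace, Matrix.mul_apply, Fintype.sum_prod_type, Fin.sum_univ_two,
        Matrix.vecMulVec_apply, rv, tv, Matrix.kronecker_apply, Matrix.add_apply]
    · have hb1 : β1 = 0 := by rw [hβ1, h1]; norm_num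
      simp [Matrix.trace, Matrix.mul_apply, Fintype.sum_prod_type, Fin.sum_univ_two,
        Matrix.vecMulVec_apply, rv, tv, Matrix.kronecker_apply, Matrix.add_apply, hb1, h1]
    · simp [Matrix.trace, Matrix.mul_apply, Fintype.sum_prod_type, Fin.sum_univ_two,
        Matrix.vecMulVec_apply, rv, tv, Matrix.kronecker_apply, Matrix.add_apply]
    · have hb1 : β1 = 0 := by rw [hβ1, h1]; norm_num
      simp [Matrix.trace, Matrix.mul_apply, Fintype.sum_prod_type, Fin.sum_univ_two,
        Matrix.vecMulVec_apply, rv, tv, Matrix.kronecker_apply, Matrix.add_apply, hb1, h1]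
  by_cases h2 : α2 = 1
  · refine ⟨vecMulVec (rv (tv !![1,0;0,0])) (rv (tv !![1,0;0,0]))
          + vecMulVec (rv (tv !![0,0;1,0])) (rv (tv !![0,0;1,0])),
        vecMulVec (rv (tv !![0,1;0,0])) (rv (tv !![0,1;0,0]))
          + vecMulVec (rv (tv !![0,0;0,1])) (rv (tv !![0,0;0,1])),
        sep_add (sep_vvT _) (sep_vvT _), sep_add (sep_vvT _) (sep_vvT _), ?_, ?_, ?_, ?_, ?_⟩
    · ext ⟨i,j⟩ ⟨k,l⟩
      fin_cases i <;> fin_cases j <;> fin_cases k <;> fin_cases l <;>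
        simp [Matrix.vecMulVec_apply, rv, tv, Matrix.one_apply, Prod.ext_iff]
    · simp [Matrix.trace, Matrix.mul_apply, Fintype.sum_prod_type, Fin.sum_univ_two,
        Matrix.vecMulVec_apply, rv, tv, Matrix.kronecker_apply, Matrix.add_apply]
    · have hb2 : β2 = 0 := by rw [hβ2, h2]; norm_num
      simp [Matrix.trace, Matrix.mul_apply, Fintype.sum_prod_type, Fin.sum_univ_two,
        Matrix.vecMulVec_apply, rv, tv, Matrix.kronecker_apply, Matrix.add_apply, hb2, h2]
    · simp [Matrix.trace, Matrix.mul_apply, Fintype.sum_prod_type, Fin.sum_univ_two,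
        Matrix.vecMulVec_apply, rv, tv, Matrix.kronecker_apply, Matrix.add_apply]
    · have hb2 : β2 = 0 := by rw [hβ2, h2]; norm_num
      simp [Matrix.trace, Matrix.mul_apply, Fintype.sum_prod_type, Fin.sum_univ_two,
        Matrix.vecMulVec_apply, rv, tv, Matrix.kronecker_apply, Matrix.add_apply, hb2, h2]
  -- main case: α1 < 1 and α2 < 1, hence both in (0,1)
  · have h1' : α1 < 1 := lt_of_le_of_ne hα1r h1
    have h2' : α2 < 1 := lt_of_le_of_ne hα2r h2
    have h1p : 0 < α1 := by linarith
    have h2p : 0 < α2 := by linarith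
    set c1 := Real.sqrt (1 - α1) with hc1def
    set s1 := Real.sqrt α1 with hs1def
    set c2 := Real.sqrt (1 - α2) with hc2def
    set s2 := Real.sqrt α2 with hs2def
    set τ := Real.sqrt (α1 + α2 - 1) with hτdef
    set ε := Real.sqrt (2 - α1 - α2) with hεdef
    have hc1 : c1^2 = 1 - α1 := Real.sq_sqrt (by linarith)
    have hs1 : s1^2 = α1 := Real.sq_sqrt (by linarith)
    have hc2 : c2^2 = 1 - α2 := Real.sq_sqrt (by linarith)
    have hs2 : s2^2 = α2 := Real.sq_sqrt (by linarith)
    have hτ : τ^2 = α1 + α2 - 1 := Real.sq_sqrt (by linarith)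
    have hε : ε^2 = 2 - α1 - α2 := Real.sq_sqrt (by linarith)
    have hs1p : 0 < s1 := Real.sqrt_pos.mpr h1p
    have hs2p : 0 < s2 := Real.sqrt_pos.mpr h2p
    have hεp : 0 < ε := Real.sqrt_pos.mpr (by linarith)
    have hb1 : β1 = c1 * s1 := by
      rw [hβ1, Real.sqrt_mul hα1l, mul_comm]
    have hb2 : β2 = c2 * s2 := by
      rw [hβ2, Real.sqrt_mul hα2l, mul_comm]
    have Hc1 : (c1:ℂ)^2 = 1 - (α1:ℂ) := by exact_mod_cast hc1
    have Hs1 : (s1:ℂ)^2 = (α1:ℂ) := by exact_mod_cast hs1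
    have Hc2 : (c2:ℂ)^2 = 1 - (α2:ℂ) := by exact_mod_cast hc2
    have Hs2 : (s2:ℂ)^2 = (α2:ℂ) := by exact_mod_cast hs2
    have Hτ : (τ:ℂ)^2 = (α1:ℂ) + (α2:ℂ) - 1 := by exact_mod_cast hτ
    have Hε : (ε:ℂ)^2 = 2 - (α1:ℂ) - (α2:ℂ) := by exact_mod_cast hε
    have Hs1ne : (s1:ℂ) ≠ 0 := by exact_mod_cast hs1p.ne'
    have Hs2ne : (s2:ℂ) ≠ 0 := by exact_mod_cast hs2p.ne'
    have Hεne : (ε:ℂ) ≠ 0 := by exact_mod_cast hεp.ne'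
    have K2 : c1/(s2*ε) * (c1/(s2*ε)) * ((1-α1)*α2) + c1/(s2*ε) * (c2/(s1*ε)) * (c1*s1*(c2*s2)) + (c2/(s1*ε) * (c1/(s2*ε)) * (c1*s1*(c2*s2)) + c2/(s1*ε) * (c2/(s1*ε)) * (α1*(1-α2)) + τ/(s1*s2) * (τ/(s1*s2)) * (α1*α2)) = 1 := by
      have e : ε^2 = c1^2 + c2^2 := by rw [hε, hc1, hc2]; ring
      have t : τ^2 = 1 - ε^2 := by rw [hτ, hε]; ring
      rw [← hc1, ← hc2, ← hs1, ← hs2]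
      have hT : c1/(s2*ε) * (c1/(s2*ε)) * (c1^2*s2^2) + c1/(s2*ε) * (c2/(s1*ε)) * (c1*s1*(c2*s2)) + (c2/(s1*ε) * (c1/(s2*ε)) * (c1*s1*(c2*s2)) + c2/(s1*ε) * (c2/(s1*ε)) * (s1^2*c2^2) + τ/(s1*s2) * (τ/(s1*s2)) * (s1^2*s2^2)) = (c1^2+c2^2)^2/ε^2 + τ^2 := by
        field_simp [hs1p.ne', hs2p.ne', hεp.ne']
        ring
      rw [hT, ← e, t]
      field_simp [hεp.ne']
      ring
    have K4 : (1 - α1) * (1 - α2) + (c2*τ/(s2*ε) * (c2*τ/(s2*ε)) * ((1-α1)*α2) + (-(c2*τ/(s2*ε) * (c1*τ/(s1*ε))) + -(c1*c2/(s1*s2))) * (c1*s1*(c2*s2))) + ((-(c1*τ/(s1*ε) * (c2*τ/(s2*ε))) + -(c1*c2/(s1*s2))) * (c1*s1*(c2*s2)) + c1*τ/(s1*ε) * (c1*τ/(s1*ε)) * (α1*(1-α2)) + c1*c2/(s1*s2) * (c1*c2/(s1*s2)) * (α1*α2)) = 0 := by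
      rw [← hc1, ← hc2, ← hs1, ← hs2]
      field_simp [hs1p.ne', hs2p.ne', hεp.ne']
      ring
    refine ⟨vecMulVec (rv (tv !![0, c2*τ/(s2*ε); -(c1*τ/(s1*ε)), 0]))
              (rv (tv !![0, c2*τ/(s2*ε); -(c1*τ/(s1*ε)), 0]))
          + PT (tv !![1, 0; 0, -(c1*c2/(s1*s2))]),
        vecMulVec (rv (tv !![0, c1/(s2*ε); c2/(s1*ε), 0]))
              (rv (tv !![0, c1/(s2*ε); c2/(s1*ε), 0]))
          + vecMulVec (rv (tv !![0, 0; 0, τ/(s1*s2)])) (rv (tv !![0, 0; 0, τ/(s1*s2)])),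
        sep_add (sep_vvT _) (sep_PT _), sep_add (sep_vvT _) (sep_vvT _), ?_, ?_, ?_, ?_, ?_⟩
    · ext ⟨i,j⟩ ⟨k,l⟩
      fin_cases i <;> fin_cases j <;> fin_cases k <;> fin_cases l <;>
        simp [Matrix.vecMulVec_apply, rv, tv, PT, Matrix.one_apply, Prod.ext_iff] <;>
        push_cast <;>
        field_simp <;>
        (first
          | linear_combination (τ:ℂ)^2*Hc2 + (1-(α2:ℂ))*Hτ + Hc1 - (ε:ℂ)^2*Hs2 - (α2:ℂ)*Hε
          | linear_combination (τ:ℂ)^2*Hc1 + (1-(α1:ℂ))*Hτ + Hc2 - (ε:ℂ)^2*Hs1 - (α1:ℂ)*Hε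
          | linear_combination (-(c1:ℂ)*(c2:ℂ)*(s1:ℂ)^2*(s2:ℂ)^2*(ε:ℂ)^2)*(Hτ + Hε)
          | linear_combination (c1:ℂ)^2*Hc2 + (1-(α2:ℂ))*Hc1 + Hτ - (s1:ℂ)^2*Hs2 - (α2:ℂ)*Hs1
          | linear_combination -((c1:ℂ)^2*Hc2 + (1-(α2:ℂ))*Hc1 + Hτ - (s1:ℂ)^2*Hs2 - (α2:ℂ)*Hs1)
          | linear_combination (-(c1:ℂ)*(c2:ℂ))*(Hτ + Hε)
          | ring)
    · simp [Matrix.trace, Matrix.mul_apply, Fintype.sum_prod_type, Fin.sum_univ_two,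
        Matrix.vecMulVec_apply, rv, tv, PT, Matrix.kronecker_apply, Matrix.add_apply]
    · simp [Matrix.trace, Matrix.mul_apply, Fintype.sum_prod_type, Fin.sum_univ_two,
        Matrix.vecMulVec_apply, rv, tv, PT, Matrix.kronecker_apply, Matrix.add_apply, hb1, hb2]
      exact_mod_cast K2
    · simp [Matrix.trace, Matrix.mul_apply, Fintype.sum_prod_type, Fin.sum_univ_two,
        Matrix.vecMulVec_apply, rv, tv, PT, Matrix.kronecker_apply, Matrix.add_apply]
    · simp [Matrix.trace, Matrix.mul_apply, Fintype.sum_prod_type, Fin.sum_univ_two,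
        Matrix.vecMulVec_apply, rv, tv, PT, Matrix.kronecker_apply, Matrix.add_apply, hb1, hb2]
      exact_mod_cast K4
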